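/- Let n be an odd integer greater than 1, t ∈ (-1,1], C > 0 with C ≤ π²·2^{-n+1/2}. Then the closures of the disks U(0,t) = {|λ - (πt)ⁿ| < πⁿ/5}, U(1,t) = {|λ - (2π+πt)ⁿ| < (3/10)|2+t|^{n-2}πⁿ}, U(-1,t) = {|λ - (πt-2π)ⁿ| < (3/10)|t-2|^{n-2}πⁿ}, and U(k,t) = {|λ - (2πk+πt)ⁿ| < (3/2)π^{n-2}C|2k+t|^{n-2}} for |k| > 1 are pairwise disjoint subsets of ℂ. -/

import Mathlib

open Real Complex

lemma gap1 (p : ℕ) (a : ℝ) (ha : 1 ≤ a) :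
    3/10 * a^p + 3/10 * (a+2)^p < (a+2)^(p+2) - a^(p+2) := by
  have h1 : a^p ≤ (a+2)^p := pow_le_pow_left₀ (by linarith) (by linarith) p
  have h2 : (1:ℝ) ≤ a^p := one_le_pow₀ ha
  have e1 : (a+2)^(p+2) = (a+2)^p * (a+2)^2 := by ring
  have e2 : a^(p+2) = a^p * a^2 := by ring
  nlinarith [mul_le_mul_of_nonneg_right h1 (sq_nonneg a)]

lemma gap0 (p : ℕ) (hodd : Odd (p+2)) (t : ℝ) (ht : -1 < t) (ht1 : t ≤ 1) :
    3/10 * 1 + 3/10 * (2+t)^p < (2+t)^(p+2) - t^(p+2) := by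
  have hb : (1:ℝ) < 2 + t := by linarith
  have hbp : (1:ℝ) ≤ (2+t)^p := one_le_pow₀ hb.le
  have e1 : (2+t)^(p+2) = (2+t)^p * (2+t)^2 := by ring
  rcases le_or_gt t 0 with h|h
  · have htn : t^(p+2) ≤ 0 := hodd.pow_nonpos h
    nlinarith [mul_le_mul_of_nonneg_left (by nlinarith : (1:ℝ) ≤ (2+t)^2)
      (by positivity : (0:ℝ) ≤ (2+t)^p)]
  · have htn : t^(p+2) ≤ 1 := pow_le_one₀ h.le ht1
    nlinarith [mul_le_mul_of_nonneg_left (by nlinarith : (4:ℝ) ≤ (2+t)^2)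
      (by positivity : (0:ℝ) ≤ (2+t)^p)]

lemma gapm1 (p : ℕ) (hodd : Odd (p+2)) (t : ℝ) (ht : -1 < t) (ht1 : t ≤ 1) :
    3/10 * (2-t)^p + 3/10 * 1 < t^(p+2) - (t-2)^(p+2) := by
  have e : (t-2)^(p+2) = -((2-t)^(p+2)) := by
    rw [show t-2 = -(2-t) by ring, hodd.neg_pow]
  rw [e]
  have hb : (1:ℝ) ≤ 2 - t := by linarith
  have hbp : (1:ℝ) ≤ (2-t)^p := one_le_pow₀ hb
  have e1 : (2-t)^(p+2) = (2-t)^p * (2-t)^2 := by ring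
  rcases le_or_gt 0 t with h|h
  · have htn : 0 ≤ t^(p+2) := pow_nonneg h _
    nlinarith [mul_le_mul_of_nonneg_left (by nlinarith : (1:ℝ) ≤ (2-t)^2)
      (by positivity : (0:ℝ) ≤ (2-t)^p)]
  · have habs : |t|^(p+2) < 1 := pow_lt_one₀ (abs_nonneg t)
      (abs_lt.mpr ⟨ht, by linarith⟩) (by omega)
    have htn : -1 < t^(p+2) := by
      have h1 : -(|t|^(p+2)) ≤ t^(p+2) := by
        rw [← _root_.abs_pow]; exact neg_abs_le _
      linarith
    nlinarith [mul_le_mul_of_nonneg_left (by nlinarith : (4:ℝ) ≤ (2-t)^2)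
      (by positivity : (0:ℝ) ≤ (2-t)^p)]

theorem stmt14 (n : ℕ) (hn : Odd n) (hn1 : 1 < n)
    (t : ℝ) (ht : t ∈ Set.Ioc (-1 : ℝ) 1)
    (C : ℝ) (hC : 0 < C) (hCs : C ≤ π ^ 2 * (2 : ℝ) ^ (-(n : ℝ) + 1 / 2))
    (U : ℤ → Set ℂ)
    (hU0 : U 0 = {lam : ℂ | ‖lam - ((π * t) ^ n : ℝ)‖ < π ^ n / 5})
    (hU1 : U 1 = {lam : ℂ |
      ‖lam - ((2 * π + π * t) ^ n : ℝ)‖ < (3 / 10) * |2 + t| ^ (n - 2) * π ^ n})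
    (hUm1 : U (-1) = {lam : ℂ |
      ‖lam - ((π * t - 2 * π) ^ n : ℝ)‖ < (3 / 10) * |t - 2| ^ (n - 2) * π ^ n})
    (hUk : ∀ k : ℤ, 1 < |k| → U k = {lam : ℂ |
      ‖lam - ((2 * π * k + π * t) ^ n : ℝ)‖ <
        (3 / 2) * π ^ (n - 2) * C * |2 * (k : ℝ) + t| ^ (n - 2)}) :
    ∀ k l : ℤ, k ≠ l → Disjoint (closure (U k)) (closure (U l)) := by
  have hπ : 0 < π := Real.pi_pos
  have hπn : 0 < π ^ n := pow_pos hπ n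
  have ht1 : -1 < t := ht.1
  have ht2 : t ≤ 1 := ht.2
  have hn3 : 3 ≤ n := by rcases hn with ⟨j, hj⟩; omega
  obtain ⟨p, hp⟩ : ∃ p, n = p + 2 := ⟨n - 2, by omega⟩
  have hn2 : n - 2 = p := by omega
  set M : ℤ → ℝ := fun k => max |2*(k:ℝ)+t| 1 with hMdef
  set c : ℤ → ℝ := fun k => (2*π*(k:ℝ) + π*t)^n with hcdef
  set R : ℤ → ℝ := fun k => 3/10 * π^n * (M k)^p with hRdef
  have hM1 : ∀ k, 1 ≤ M k := fun k => le_max_right _ _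
  have hRpos : ∀ k, 0 < R k := by
    intro k
    have h1 := hM1 k
    have : (0:ℝ) < M k := by linarith
    simp only [hRdef]
    positivity
  have hck : ∀ k : ℤ, c k = π^n * (2*(k:ℝ)+t)^n := by
    intro k
    simp only [hcdef]
    rw [show 2*π*(k:ℝ)+π*t = π*(2*(k:ℝ)+t) by ring, mul_pow]
  -- M values
  have hM0 : M 0 = 1 := by
    simp only [hMdef, Int.cast_zero, mul_zero, zero_add]
    exact max_eq_right (abs_le.mpr ⟨by linarith, ht2⟩)
  have hMpos' : ∀ k : ℤ, 1 ≤ k → M k = 2*(k:ℝ)+t := by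
    intro k hk
    have hk' : (1:ℝ) ≤ (k:ℝ) := by exact_mod_cast hk
    simp only [hMdef]
    rw [abs_of_pos (by linarith), max_eq_left (by linarith)]
  have hMneg' : ∀ k : ℤ, k ≤ -1 → M k = -(2*(k:ℝ)+t) := by
    intro k hk
    have hk' : (k:ℝ) ≤ -1 := by exact_mod_cast hk
    simp only [hMdef]
    rw [abs_of_neg (by linarith), max_eq_left (by linarith)]
  -- radius bound for |k| > 1
  have hCle : C ≤ π^2 / 5 := by
    have e : (2:ℝ)^(-(n:ℝ)+1/2) = Real.sqrt 2 / 2^n := by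
      rw [Real.rpow_add two_pos, Real.rpow_neg (by norm_num), Real.rpow_natCast,
        ← Real.sqrt_eq_rpow]
      ring
    have hs : Real.sqrt 2 ≤ 1.5 := by
      rw [show (1.5:ℝ) = Real.sqrt (1.5^2) from (Real.sqrt_sq (by norm_num)).symm]
      exact Real.sqrt_le_sqrt (by norm_num)
    have h8 : (8:ℝ) ≤ 2^n := by
      calc (8:ℝ) = 2^3 := by norm_num
      _ ≤ 2^n := pow_le_pow_right₀ (by norm_num) (by omega)
    have hpow : (2:ℝ)^(-(n:ℝ)+1/2) ≤ 1/5 := by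
      rw [e]
      rw [div_le_div_iff₀ (by positivity) (by norm_num)]
      nlinarith
    calc C ≤ π^2 * (2:ℝ)^(-(n:ℝ)+1/2) := hCs
    _ ≤ π^2 * (1/5) := by nlinarith [sq_nonneg π]
    _ = π^2/5 := by ring
  -- Step A : closures inside closed balls
  have key : ∀ (k : ℤ) (x r : ℝ), U k = {lam : ℂ | ‖lam - (x:ℂ)‖ < r} →
      x = c k → r ≤ R k → closure (U k) ⊆ Metric.closedBall ((c k : ℝ) : ℂ) (R k) := by
    intro k x r hU hx hr
    have hsub : U k ⊆ Metric.ball ((c k : ℝ) : ℂ) (R k) := by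
      intro lam hl
      rw [hU] at hl
      simp only [Set.mem_setOf_eq] at hl
      rw [Metric.mem_ball, Complex.dist_eq]
      calc ‖lam - (c k : ℂ)‖ = ‖lam - (x:ℂ)‖ := by rw [hx]
      _ < r := hl
      _ ≤ R k := hr
    exact (closure_mono hsub).trans Metric.closure_ball_subset_closedBall
  have hsub : ∀ k, closure (U k) ⊆ Metric.closedBall ((c k : ℝ) : ℂ) (R k) := by
    intro k
    rcases eq_or_ne k 0 with rfl | hk0
    · refine key 0 _ _ hU0 ?_ ?_
      · rw [hck, show (2*((0:ℤ):ℝ)+t) = t by push_cast; ring, ← mul_pow]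
      · simp only [hRdef, hM0, one_pow, mul_one]
        linarith
    rcases eq_or_ne k 1 with rfl | hk1
    · refine key 1 _ _ hU1 ?_ ?_
      · rw [hck, show (2*((1:ℤ):ℝ)+t) = 2+t by push_cast; ring, ← mul_pow]
        congr 1; ring
      · apply le_of_eq
        have h1 : M 1 = 2 + t := by
          rw [hMpos' 1 le_rfl]; push_cast; ring
        simp only [hRdef]
        rw [hn2, abs_of_pos (show (0:ℝ) < 2+t by linarith), h1]
        ring
    rcases eq_or_ne k (-1) with rfl | hkm1
    · refine key (-1) _ _ hUm1 ?_ ?_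
      · rw [hck, show (2*((-1:ℤ):ℝ)+t) = t-2 by push_cast; ring, ← mul_pow]
        congr 1; ring
      · apply le_of_eq
        have h1 : M (-1) = 2 - t := by
          rw [hMneg' (-1) le_rfl]; push_cast; ring
        have h2 : |t - 2| = 2 - t := by rw [abs_of_neg (by linarith)]; ring
        simp only [hRdef]
        rw [hn2, h2, h1]
        ring
    · have hk : 1 < |k| := by
        rcases lt_or_ge 1 k with h | h
        · exact lt_of_lt_of_le h (le_abs_self k)
        · have : k < -1 := by omega
          calc (1:ℤ) < -k := by omega
          _ ≤ |k| := neg_le_abs k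
      refine key k _ _ (hUk k hk) ?_ ?_
      · simp only [hcdef]
      · have hMk : M k = |2*(k:ℝ)+t| := by
          rcases lt_or_ge 1 k with h | h
          · rw [hMpos' k (by omega), abs_of_pos]
            have : (2:ℝ) ≤ (k:ℝ) := by exact_mod_cast (by omega : (2:ℤ) ≤ k)
            linarith
          · have hkk : k ≤ -2 := by omega
            rw [hMneg' k (by omega), abs_of_neg]
            have : (k:ℝ) ≤ -2 := by exact_mod_cast hkk
            linarith
        simp only [hRdef]
        rw [hn2, hMk]
        have hMp : (0:ℝ) ≤ (M k)^p := by positivity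
        have hπp : (0:ℝ) < π^p := pow_pos hπ p
        have h30 : 3/2 * π^p * C ≤ 3/10 * π^n := by
          rw [hp, pow_add]
          nlinarith
        have habs : (0:ℝ) ≤ |2*(k:ℝ)+t|^p := by positivity
        nlinarith [mul_le_mul_of_nonneg_right h30 habs]
  -- Step B : consecutive gaps
  have hgap : ∀ k : ℤ, R k + R (k+1) < c (k+1) - c k := by
    intro k
    have core : 3/10 * (M k)^p + 3/10 * (M (k+1))^p
        < (2*((k:ℝ)+1)+t)^n - (2*(k:ℝ)+t)^n := by
      rcases le_or_gt 1 k with hk | hk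
      · have hk' : (1:ℝ) ≤ (k:ℝ) := by exact_mod_cast hk
        have ha : (1:ℝ) ≤ 2*(k:ℝ)+t := by linarith
        have h1 : M k = 2*(k:ℝ)+t := hMpos' k hk
        have h2 : M (k+1) = 2*(k:ℝ)+t+2 := by
          rw [hMpos' (k+1) (by omega)]; push_cast; ring
        rw [h1, h2, hp]
        have := gap1 p (2*(k:ℝ)+t) ha
        calc 3/10 * (2*(k:ℝ)+t)^p + 3/10 * (2*(k:ℝ)+t+2)^p
            = 3/10 * (2*(k:ℝ)+t)^p + 3/10 * ((2*(k:ℝ)+t)+2)^p := by ring_nf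
        _ < ((2*(k:ℝ)+t)+2)^(p+2) - (2*(k:ℝ)+t)^(p+2) := this
        _ = (2*((k:ℝ)+1)+t)^(p+2) - (2*(k:ℝ)+t)^(p+2) := by ring_nf
      rcases eq_or_ne k 0 with rfl | hk0
      · have h2 : M ((0:ℤ)+1) = 2+t := by
          rw [show ((0:ℤ)+1) = 1 from rfl, hMpos' 1 le_rfl]; push_cast; ring
        rw [hM0, h2, hp,
          show (2*(((0:ℤ):ℝ)+1)+t) = 2+t by push_cast; ring,
          show (2*((0:ℤ):ℝ)+t) = t by push_cast; ring]
        have hg := gap0 p ((by rw [← hp]; exact hn : Odd (p+2))) t ht1 ht2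
        simp only [one_pow]
        linarith
      rcases eq_or_ne k (-1) with rfl | hkm1
      · have h1 : M (-1) = 2-t := by rw [hMneg' (-1) le_rfl]; push_cast; ring
        rw [h1, show ((-1:ℤ)+1) = 0 from rfl, hM0, hp,
          show (2*(((-1:ℤ):ℝ)+1)+t) = t by push_cast; ring,
          show (2*((-1:ℤ):ℝ)+t) = t-2 by push_cast; ring]
        have hg := gapm1 p ((by rw [← hp]; exact hn : Odd (p+2))) t ht1 ht2
        simp only [one_pow]
        linarith
      · -- k ≤ -2
        have hkk : k ≤ -2 := by omega
        have hkk' : (k:ℝ) ≤ -2 := by exact_mod_cast hkk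
        set B : ℝ := -(2*(k:ℝ)+t) - 2 with hB
        have hB1 : (1:ℝ) ≤ B := by rw [hB]; linarith
        have h1 : M k = B + 2 := by rw [hMneg' k (by omega)]; rw [hB]; ring
        have h2 : M (k+1) = B := by
          rw [hMneg' (k+1) (by omega)]; push_cast; rw [hB]; ring
        have e1 : (2*((k:ℝ)+1)+t) = -B := by rw [hB]; ring
        have e2 : (2*(k:ℝ)+t) = -(B+2) := by rw [hB]; ring
        rw [h1, h2, e1, e2, hn.neg_pow, hn.neg_pow, hp]
        have := gap1 p B hB1
        linarith
    have hπn' : (0:ℝ) < π^n := hπn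
    calc R k + R (k+1) = π^n * (3/10 * (M k)^p + 3/10 * (M (k+1))^p) := by
          simp only [hRdef]; ring
    _ < π^n * ((2*((k:ℝ)+1)+t)^n - (2*(k:ℝ)+t)^n) :=
          (mul_lt_mul_iff_right₀ hπn').mpr core
    _ = c (k+1) - c k := by rw [hck, hck]; push_cast; ring
  -- Step C : all pairs
  have hfar : ∀ (m : ℕ) (k : ℤ), R k + R (k + m + 1) < c (k + m + 1) - c k := by
    intro m
    induction m with
    | zero => intro k; simpa using hgap k
    | succ m ih =>
      intro k
      have h1 := hgap (k + m + 1)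
      have h2 := ih k
      have h3 := hRpos (k + m + 1)
      have e : k + (m+1:ℕ) + 1 = k + m + 1 + 1 := by push_cast; ring
      rw [e]
      linarith
  have main : ∀ k l : ℤ, k < l → Disjoint (closure (U k)) (closure (U l)) := by
    intro k l h
    obtain ⟨m, rfl⟩ : ∃ m : ℕ, l = k + m + 1 := ⟨(l-k-1).toNat, by omega⟩
    have hd := hfar m k
    refine Disjoint.mono (hsub k) (hsub (k+m+1)) (Metric.closedBall_disjoint_closedBall ?_)
    have hdist : dist ((c k : ℝ):ℂ) ((c (k+m+1) : ℝ):ℂ) = |c k - c (k+m+1)| := by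
      rw [Complex.dist_eq, ← Complex.ofReal_sub, Complex.norm_real, Real.norm_eq_abs]
    rw [hdist, abs_sub_comm, abs_of_pos (by linarith [hRpos k, hRpos (k+m+1)])]
    linarith
  intro k l hkl
  rcases lt_or_gt_of_ne hkl with h | h
  · exact main k l h
  · exact (main l k h).symm
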